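/- Let G ≤ Sym(ℕ) be a closed non-compact subgroup, i.e., some point of ℕ has infinite G-orbit. Consider the shift action of G on ℝ^ℕ. Then there exists a G-invariant subspace Y of ℝ^ℕ on which the action has a dense orbit and all orbits are meager in Y. -/

import Mathlib

/-- The shift action of a permutation of `ℕ` on `ℝ^ℕ`: `(g · x) n = x (g⁻¹ n)`. -/
def shiftR (g : Equiv.Perm ℕ) (x : ℕ → ℝ) : ℕ → ℝ := fun n => x (g⁻¹ n)

open MulAction Filter
open scoped Topology Pointwise

namespace Stmt15Aux

open scoped Classical

/-- B. H. Neumann's lemma: a finite set all of whose points have infinite orbit can be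
moved off itself. -/
lemma exists_smul_disjoint {Γ X : Type*} [Group Γ] [MulAction Γ X] (F : Finset X)
    (hF : ∀ x ∈ F, (orbit Γ x).Infinite) : ∃ g : Γ, ∀ x ∈ F, g • x ∉ F := by
  by_contra hcon
  push_neg at hcon
  set s : Finset (X × X) := (F ×ˢ F).filter (fun p => ∃ g : Γ, g • p.1 = p.2) with hs
  let gc : X × X → Γ := fun p => if h : ∃ g : Γ, g • p.1 = p.2 then h.choose else 1
  have hcovers : ⋃ p ∈ s, (gc p) • ((stabilizer Γ p.1 : Subgroup Γ) : Set Γ) = Set.univ := by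
    refine Set.eq_univ_of_forall fun γ => ?_
    obtain ⟨x, hx, hγx⟩ := hcon γ
    set w := γ • x with hw
    have hpmem : (x, w) ∈ s := by
      simp only [hs, Finset.mem_filter, Finset.mem_product]
      exact ⟨⟨hx, hγx⟩, γ, hw.symm⟩
    have hex : ∃ g : Γ, g • x = w := ⟨γ, hw.symm⟩
    refine Set.mem_biUnion hpmem ?_
    rw [Set.mem_smul_set_iff_inv_smul_mem]
    have hgc : gc (x, w) • x = w := by
      simp only [gc, dif_pos hex]; exact hex.choose_spec
    show (gc (x, w))⁻¹ • γ ∈ stabilizer Γ x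
    rw [smul_eq_mul, mem_stabilizer_iff, mul_smul, ← hw, inv_smul_eq_iff]
    exact hgc.symm
  obtain ⟨p, hp, hfi⟩ := Subgroup.exists_finiteIndex_of_leftCoset_cover hcovers
  have hx : p.1 ∈ F := (Finset.mem_product.mp (Finset.mem_filter.mp hp).1).1
  have h0 : (stabilizer Γ p.1).index = 0 := by
    rw [index_stabilizer]; exact (hF p.1 hx).ncard
  exact hfi.index_ne_zero h0

lemma smul_mem_orbit_of_mem {Γ X : Type*} [Group Γ] [MulAction Γ X] {x a : X} (γ : Γ)
    (h : x ∈ orbit Γ a) : γ • x ∈ orbit Γ a := by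
  obtain ⟨δ, rfl⟩ := h
  rw [smul_smul]
  exact mem_orbit a (γ * δ)

lemma rat_near (x : ℝ) {ε : ℝ} (hε : 0 < ε) : ∃ q : ℚ, q ≠ 0 ∧ |(q : ℝ) - x| < ε := by
  obtain ⟨q, hq1, hq2⟩ := exists_rat_btwn (show x < x + ε by linarith)
  by_cases h : q = 0
  · subst h
    obtain ⟨r, hr1, hr2⟩ := exists_rat_btwn hq2
    have hr0 : (0 : ℝ) < (r : ℝ) := by exact_mod_cast hr1
    refine ⟨r, ?_, ?_⟩
    · exact_mod_cast hr0.ne'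
    · rw [abs_sub_lt_iff]
      push_cast at hq1 hr1 hr2 ⊢
      constructor <;> linarith
  · refine ⟨q, h, ?_⟩
    rw [abs_sub_lt_iff]
    constructor <;> linarith

noncomputable def pe : ℕ → (ℕ →₀ ℚ) := (exists_surjective_nat (ℕ →₀ ℚ)).choose

lemma pe_surj : Function.Surjective pe := (exists_surjective_nat (ℕ →₀ ℚ)).choose_spec

variable (G : Subgroup (Equiv.Perm ℕ)) (a : ℕ)

lemma exists_avoid (ha : (orbit (↥G) a).Infinite) (U s : Finset ℕ)
    (hs : ↑s ⊆ orbit (↥G) a) : ∃ γ : ↥G, ∀ n ∈ s, γ⁻¹ • n ∉ U := by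
  set F : Finset ℕ := s ∪ U.filter (fun n => n ∈ orbit (↥G) a) with hF
  have horb : ∀ x ∈ F, (orbit (↥G) x).Infinite := by
    intro x hx
    have hxO : x ∈ orbit (↥G) a := by
      rcases Finset.mem_union.mp hx with h | h
      · exact hs h
      · exact (Finset.mem_filter.mp h).2
    rwa [orbit_eq_iff.mpr hxO]
  obtain ⟨γ, hγ⟩ := exists_smul_disjoint F horb
  refine ⟨γ⁻¹, fun n hn hmem => ?_⟩
  rw [inv_inv] at hmem
  have hnF : n ∈ F := Finset.mem_union_left _ hn
  have hmemO : γ • n ∈ orbit (↥G) a := smul_mem_orbit_of_mem γ (hs hn)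
  exact hγ n hnF (Finset.mem_union_right _ (Finset.mem_filter.mpr ⟨hmem, hmemO⟩))

noncomputable def gp (ha : (orbit (↥G) a).Infinite) (U s : Finset ℕ) : ↥G :=
  if h : ↑s ⊆ orbit (↥G) a then (exists_avoid G a ha U s h).choose else 1

lemma gp_spec (ha : (orbit (↥G) a).Infinite) (U s : Finset ℕ)
    (h : ↑s ⊆ orbit (↥G) a) : ∀ n ∈ s, (gp G a ha U s)⁻¹ • n ∉ U := by
  rw [gp, dif_pos h]
  exact (exists_avoid G a ha U s h).choose_spec

noncomputable def mkBlk (ha : (orbit (↥G) a).Infinite) (U : Finset ℕ) (p : ℕ →₀ ℚ) :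
    Finset ℕ :=
  if ↑p.support ⊆ orbit (↥G) a then
    p.support.image (fun n => (gp G a ha U p.support)⁻¹ • n) else ∅

noncomputable def UU (ha : (orbit (↥G) a).Infinite) : ℕ → Finset ℕ
  | 0 => ∅
  | k + 1 => UU ha k ∪ mkBlk G a ha (UU ha k) (pe k)

noncomputable def blk (ha : (orbit (↥G) a).Infinite) (k : ℕ) : Finset ℕ :=
  mkBlk G a ha (UU G a ha k) (pe k)

lemma UU_succ (ha : (orbit (↥G) a).Infinite) (k : ℕ) :
    UU G a ha (k + 1) = UU G a ha k ∪ blk G a ha k := rfl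

lemma blk_subset_orbit (ha : (orbit (↥G) a).Infinite) (k : ℕ) :
    ↑(blk G a ha k) ⊆ orbit (↥G) a := by
  intro n hn
  unfold blk mkBlk at hn
  split_ifs at hn with h
  · obtain ⟨m, hm, rfl⟩ := Finset.mem_image.mp hn
    exact smul_mem_orbit_of_mem _ (h hm)
  · simp at hn

lemma blk_disj (ha : (orbit (↥G) a).Infinite) (k : ℕ) :
    ∀ n ∈ blk G a ha k, n ∉ UU G a ha k := by
  intro n hn
  unfold blk mkBlk at hn
  split_ifs at hn with h
  · obtain ⟨m, hm, rfl⟩ := Finset.mem_image.mp hn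
    exact gp_spec G a ha _ _ h m hm
  · simp at hn

lemma UU_mono (ha : (orbit (↥G) a).Infinite) {j k : ℕ} (h : j ≤ k) :
    UU G a ha j ⊆ UU G a ha k := by
  induction k, h using Nat.le_induction with
  | base => exact subset_rfl
  | succ k hk ih =>
    exact ih.trans (by rw [UU_succ]; exact Finset.subset_union_left)

lemma blk_unique (ha : (orbit (↥G) a).Infinite) {n j k : ℕ}
    (hj : n ∈ blk G a ha j) (hk : n ∈ blk G a ha k) : j = k := by
  rcases lt_trichotomy j k with h | h | h
  · exact absurd (UU_mono G a ha h (by rw [UU_succ]; exact Finset.mem_union_right _ hj))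
      (blk_disj G a ha k n hk)
  · exact h
  · exact absurd (UU_mono G a ha h (by rw [UU_succ]; exact Finset.mem_union_right _ hk))
      (blk_disj G a ha j n hj)

noncomputable def yy (ha : (orbit (↥G) a).Infinite) : ℕ → ℝ := fun n =>
  if h : ∃ k, n ∈ blk G a ha k then
    ((pe (Nat.find h)) ((gp G a ha (UU G a ha (Nat.find h)) (pe (Nat.find h)).support) • n) : ℚ)
  else 0

lemma yy_apply (ha : (orbit (↥G) a).Infinite) {k n : ℕ} (hn : n ∈ blk G a ha k) :
    yy G a ha n = ((pe k) ((gp G a ha (UU G a ha k) (pe k).support) • n) : ℚ) := by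
  have h : ∃ k, n ∈ blk G a ha k := ⟨k, hn⟩
  have hfind : Nat.find h = k := blk_unique G a ha (Nat.find_spec h) hn
  rw [yy, dif_pos h, hfind]

lemma yy_zero_of_not_orbit (ha : (orbit (↥G) a).Infinite) {n : ℕ}
    (hn : n ∉ orbit (↥G) a) : yy G a ha n = 0 := by
  rw [yy, dif_neg]
  rintro ⟨k, hk⟩
  exact hn (blk_subset_orbit G a ha k hk)

lemma realize (ha : (orbit (↥G) a).Infinite) (p : ℕ →₀ ℚ)
    (hp : ↑p.support ⊆ orbit (↥G) a) :
    ∃ γ : ↥G, ∀ n ∈ p.support, yy G a ha (γ⁻¹ • n) = (p n : ℝ) := by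
  obtain ⟨k, rfl⟩ := pe_surj p
  refine ⟨gp G a ha (UU G a ha k) ((pe k).support), fun n hn => ?_⟩
  have hb : (gp G a ha (UU G a ha k) ((pe k).support))⁻¹ • n ∈ blk G a ha k := by
    unfold blk mkBlk
    rw [if_pos hp]
    exact Finset.mem_image_of_mem _ hn
  rw [yy_apply G a ha hb, smul_inv_smul]

end Stmt15Aux

open Stmt15Aux in
theorem stmt15 (G : Subgroup (Equiv.Perm ℕ))
    (hGclosed : @IsClosed _
      (TopologicalSpace.induced (fun σ : Equiv.Perm ℕ => (σ : ℕ → ℕ))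
        Pi.topologicalSpace)
      (G : Set (Equiv.Perm ℕ)))
    (hnc : ∃ a : ℕ, (MulAction.orbit G a).Infinite) :
    ∃ Y : Set (ℕ → ℝ),
      (∀ g ∈ G, ∀ x ∈ Y, shiftR g x ∈ Y) ∧
      (∃ y ∈ Y, Y ⊆ closure {x : ℕ → ℝ | ∃ g ∈ G, x = shiftR g y}) ∧
      (∀ y ∈ Y, IsMeagre
        ((Subtype.val ⁻¹' {x : ℕ → ℝ | ∃ g ∈ G, x = shiftR g y}) : Set Y)) := by
  classical
  obtain ⟨a, ha⟩ := hnc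
  set Y : Set (ℕ → ℝ) := {z : ℕ → ℝ | ∀ n, n ∉ orbit (↥G) a → z n = 0} with hYdef
  refine ⟨Y, ?_, ?_, ?_⟩
  · -- invariance
    intro g hg x hx n hn
    have hinv : g⁻¹ n ∉ orbit (↥G) a := by
      intro hmem
      have h2 : (⟨g, hg⟩ : ↥G) • (g⁻¹ n) ∈ orbit (↥G) a := smul_mem_orbit_of_mem _ hmem
      have h3 : (⟨g, hg⟩ : ↥G) • (g⁻¹ n) = n := Equiv.apply_symm_apply g n
      rw [h3] at h2
      exact hn h2
    exact hx _ hinv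
  · -- dense orbit
    refine ⟨yy G a ha, fun n hn => yy_zero_of_not_orbit G a ha hn, ?_⟩
    intro z hz
    have happrox : ∀ m : ℕ, ∃ γ : ↥G,
        ∀ n ≤ m, |shiftR (↑γ) (yy G a ha) n - z n| < 1 / (m + 1) := by
      intro m
      have hq : ∀ n : ℕ, ∃ q : ℚ, q ≠ 0 ∧ |(q : ℝ) - z n| < 1 / (m + 1) :=
        fun n => rat_near (z n) (by positivity)
      choose q hq0 hqd using hq
      set s : Finset ℕ := (Finset.range (m + 1)).filter (fun n => n ∈ orbit (↥G) a) with hsdef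
      set p : ℕ →₀ ℚ := Finsupp.onFinset s (fun n => if n ∈ s then q n else 0)
        (fun n h => by by_contra hc; exact h (if_neg hc)) with hpdef
      have hps : p.support ⊆ s := Finsupp.support_onFinset_subset
      have hpO : ↑p.support ⊆ orbit (↥G) a := fun n hn =>
        (Finset.mem_filter.mp (hps hn)).2
      obtain ⟨γ, hγ⟩ := realize G a ha p hpO
      refine ⟨γ, fun n hnm => ?_⟩
      have hsh : shiftR (↑γ) (yy G a ha) n = yy G a ha (γ⁻¹ • n) := rfl
      by_cases hO : n ∈ orbit (↥G) a
      · have hns : n ∈ s := Finset.mem_filter.mpr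
          ⟨Finset.mem_range.mpr (Nat.lt_succ_of_le hnm), hO⟩
        have hpn : p n = q n := by
          rw [hpdef, Finsupp.onFinset_apply, if_pos hns]
        have hsupp : n ∈ p.support := Finsupp.mem_support_iff.mpr (by rw [hpn]; exact hq0 n)
        rw [hsh, hγ n hsupp, hpn]
        exact hqd n
      · have h1 : z n = 0 := hz n hO
        have h2 : γ⁻¹ • n ∉ orbit (↥G) a := by
          intro hmem
          have := smul_mem_orbit_of_mem γ hmem
          rw [smul_inv_smul] at this
          exact hO this
        rw [hsh, yy_zero_of_not_orbit G a ha h2, h1]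
        simp only [sub_zero, abs_zero]
        positivity
    choose γs hγs using happrox
    have htend : Tendsto (fun m => shiftR (↑(γs m)) (yy G a ha)) atTop (𝓝 z) := by
      rw [tendsto_pi_nhds]
      intro n
      rw [tendsto_iff_dist_tendsto_zero]
      refine squeeze_zero' (Eventually.of_forall fun m => dist_nonneg) ?_
        tendsto_one_div_add_atTop_nhds_zero_nat
      filter_upwards [eventually_ge_atTop n] with m hm
      rw [Real.dist_eq]
      exact (hγs m n hm).le
    exact mem_closure_of_tendsto htend
      (Eventually.of_forall fun m => ⟨↑(γs m), (γs m).2, rfl⟩)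
  · -- all orbits meagre
    intro y' hy'
    have key : (Subtype.val ⁻¹' {x : ℕ → ℝ | ∃ g ∈ G, x = shiftR g y'} : Set Y) ⊆
        ⋃ m : ℕ, {w : Y | (w : ℕ → ℝ) a = y' m} := by
      intro w hw
      obtain ⟨g, hg, heq⟩ := hw
      refine Set.mem_iUnion.mpr ⟨g⁻¹ a, ?_⟩
      show (w : ℕ → ℝ) a = y' (g⁻¹ a)
      rw [heq]; rfl
    refine IsMeagre.mono key ?_
    refine isMeagre_iUnion fun m => ?_
    set D : Set Y := {w : Y | (w : ℕ → ℝ) a = y' m} with hD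
    have hclosed : IsClosed D := by
      have : D = (fun w : Y => (w : ℕ → ℝ) a) ⁻¹' {y' m} := rfl
      rw [this]
      exact isClosed_singleton.preimage ((continuous_apply a).comp continuous_subtype_val)
    have hint : interior D = ∅ := by
      by_contra h
      obtain ⟨z, hz⟩ := Set.nonempty_iff_ne_empty.mpr h
      have hzD' : z ∈ D := interior_subset hz
      have hzD : (z : ℕ → ℝ) a = y' m := hzD'
      have hnhds : D ∈ 𝓝 z := mem_interior_iff_mem_nhds.mp hz
      rw [nhds_induced] at hnhds
      obtain ⟨W, hW, hWD⟩ := hnhds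
      have hpath : Tendsto (fun t : ℝ => Function.update (z : ℕ → ℝ) a ((z : ℕ → ℝ) a + t))
          (𝓝 0) (𝓝 (z : ℕ → ℝ)) := by
        rw [tendsto_pi_nhds]
        intro n
        rcases eq_or_ne n a with rfl | hne
        · simp only [Function.update_self]
          have : Tendsto (fun t : ℝ => (z : ℕ → ℝ) n + t) (𝓝 0)
              (𝓝 ((z : ℕ → ℝ) n + 0)) := tendsto_const_nhds.add tendsto_id
          simpa using this
        · simp only [Function.update_of_ne hne]
          exact tendsto_const_nhds
      have hWn : (fun t : ℝ => Function.update (z : ℕ → ℝ) a ((z : ℕ → ℝ) a + t)) ⁻¹' W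
          ∈ 𝓝 (0 : ℝ) := hpath hW
      have h3 : ((fun t : ℝ => Function.update (z : ℕ → ℝ) a ((z : ℕ → ℝ) a + t)) ⁻¹' W)
          ∩ {t : ℝ | t ≠ 0} ∈ 𝓝[≠] (0 : ℝ) :=
        Filter.inter_mem (mem_nhdsWithin_of_mem_nhds hWn) self_mem_nhdsWithin
      obtain ⟨t, htW, ht0⟩ := Filter.nonempty_of_mem h3
      have hft : Function.update (z : ℕ → ℝ) a ((z : ℕ → ℝ) a + t) ∈ Y := by
        intro n hn
        have hna : n ≠ a := fun h' => hn (by rw [h']; exact mem_orbit_self a)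
        rw [Function.update_of_ne hna]
        exact z.2 n hn
      have hmemD : (⟨_, hft⟩ : Y) ∈ D := hWD htW
      have heq : Function.update (z : ℕ → ℝ) a ((z : ℕ → ℝ) a + t) a = y' m := hmemD
      rw [Function.update_self, hzD] at heq
      exact ht0 (by linarith)
    have hnwd : IsNowhereDense D := hclosed.isNowhereDense_iff.mpr hint
    exact isMeagre_iff_countable_union_isNowhereDense.mpr
      ⟨{D}, by simpa using hnwd, Set.countable_singleton D, by simp⟩
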